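/- arXiv:1907.04580 — 2 statements merged into one kernel-verified Lean document; each statement's English description precedes it below -/
import Mathlib

section
/- Let P₀, P₁, Q ∈ ℝ^{n×n} be symmetric with Q positive semidefinite, R ∈ ℝ^{m×m} symmetric positive definite, B ∈ ℝ^{n×m}, and E ∈ ℝ^{n×n} invertible, satisfying the Riccati step E^{-⊤} P₀ E^{-1} − P₁ = Q − P₁ B (R + Bᵀ P₁ B)^{-1} Bᵀ P₁. Define the feedback F := −(R + Bᵀ P₁ B)^{-1} Bᵀ P₁ and, for x ∈ ℝ^n, the closed-loop update x⁺ := (I + B F) E x. Then ⟨P₁ x⁺, x⁺⟩ ≤ ⟨P₀ x, x⟩ − ⟨Q E x, E x⟩ for all x ∈ ℝ^n. -/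
open Matrix

private lemma quad_eq {n m : ℕ} (A : Matrix (Fin n) (Fin m) ℝ) (u : Fin m → ℝ)
    (v : Fin n → ℝ) : A.mulVec u ⬝ᵥ v = u ⬝ᵥ Aᵀ.mulVec v := by
  rw [Matrix.dotProduct_mulVec, Matrix.vecMul_transpose]

/-- One-step Lyapunov decrease for the Riccati feedback
`F = -(R + Bᵀ P₁ B)⁻¹ Bᵀ P₁` and closed-loop update `x⁺ = (I + B F) E x`. -/
theorem stmt_4 (n m : ℕ) (P₀ P₁ Q : Matrix (Fin n) (Fin n) ℝ)
    (R : Matrix (Fin m) (Fin m) ℝ) (B : Matrix (Fin n) (Fin m) ℝ)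
    (E : Matrix (Fin n) (Fin n) ℝ)
    (hP₀ : P₀.IsSymm) (hP₁ : P₁.IsSymm) (hQsymm : Q.IsSymm) (hQ : Q.PosSemidef)
    (hR : R.PosDef) (hE : IsUnit E)
    (hRic : (E⁻¹)ᵀ * P₀ * E⁻¹ - P₁ =
      Q - P₁ * B * (R + Bᵀ * P₁ * B)⁻¹ * Bᵀ * P₁) :
    ∀ x : Fin n → ℝ,
      P₁.mulVec (((1 : Matrix (Fin n) (Fin n) ℝ) + B * (-(R + Bᵀ * P₁ * B)⁻¹ * Bᵀ * P₁)).mulVec (E.mulVec x)) ⬝ᵥ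
        (((1 : Matrix (Fin n) (Fin n) ℝ) + B * (-(R + Bᵀ * P₁ * B)⁻¹ * Bᵀ * P₁)).mulVec (E.mulVec x)) ≤
      (P₀.mulVec x ⬝ᵥ x) - (Q.mulVec (E.mulVec x) ⬝ᵥ E.mulVec x) := by
  intro x
  set S : Matrix (Fin m) (Fin m) ℝ := R + Bᵀ * P₁ * B with hSdef
  have hRs : Rᵀ = R := by simpa using hR.isHermitian.eq
  have hSsymm : Sᵀ = S := by
    simp only [hSdef, transpose_add, transpose_mul, transpose_transpose, hP₁.eq, hRs]
    rw [Matrix.mul_assoc]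
  set M : Matrix (Fin n) (Fin n) ℝ := 1 + B * (-S⁻¹ * Bᵀ * P₁) with hMdef
  set y : Fin n → ℝ := E.mulVec x with hy
  have hLHS : P₁.mulVec (M.mulVec y) ⬝ᵥ M.mulVec y
      = (Mᵀ * P₁ * M).mulVec y ⬝ᵥ y := by
    rw [show (Mᵀ * P₁ * M).mulVec y = Mᵀ.mulVec (P₁.mulVec (M.mulVec y)) by
      simp only [Matrix.mulVec_mulVec, Matrix.mul_assoc]]
    rw [quad_eq Mᵀ (P₁.mulVec (M.mulVec y)) y, transpose_transpose,
      dotProduct_comm]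
  have hx : x = E⁻¹.mulVec y := by
    rw [hy, Matrix.mulVec_mulVec,
      Matrix.nonsing_inv_mul _ ((Matrix.isUnit_iff_isUnit_det E).mp hE),
      Matrix.one_mulVec]
  have hP0 : P₀.mulVec x ⬝ᵥ x = ((E⁻¹)ᵀ * P₀ * E⁻¹).mulVec y ⬝ᵥ y := by
    rw [show ((E⁻¹)ᵀ * P₀ * E⁻¹).mulVec y = (E⁻¹)ᵀ.mulVec (P₀.mulVec (E⁻¹.mulVec y)) by
      simp only [Matrix.mulVec_mulVec, Matrix.mul_assoc]]
    rw [quad_eq (E⁻¹)ᵀ (P₀.mulVec (E⁻¹.mulVec y)) y, transpose_transpose,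
      dotProduct_comm, hx, dotProduct_comm]
  have hRic' : (E⁻¹)ᵀ * P₀ * E⁻¹ - Q = P₁ - P₁ * B * S⁻¹ * Bᵀ * P₁ := by
    have h := hRic
    rw [sub_eq_iff_eq_add] at h
    rw [h]; abel
  -- nonnegativity of the gap quadratic form
  have hG : ∀ v : Fin n → ℝ,
      0 ≤ ((E⁻¹)ᵀ * P₀ * E⁻¹ - Q - Mᵀ * P₁ * M).mulVec v ⬝ᵥ v := by
    by_cases hS : IsUnit S
    · have hSinv : S⁻¹ * S = 1 :=
        Matrix.nonsing_inv_mul _ ((Matrix.isUnit_iff_isUnit_det S).mp hS)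
      have hSinvT : (S⁻¹)ᵀ = S⁻¹ := by
        rw [Matrix.transpose_nonsing_inv, hSsymm]
      have hMT : Mᵀ = 1 + (-(P₁ * B * S⁻¹)) * Bᵀ := by
        rw [hMdef]
        simp only [transpose_add, transpose_one, transpose_mul, transpose_neg,
          transpose_transpose, hSinvT, hP₁.eq, Matrix.mul_neg, Matrix.neg_mul,
          Matrix.mul_assoc]
      have hBPB : Bᵀ * P₁ * B = S - R := by rw [hSdef]; abel
      have hKT : (S⁻¹ * Bᵀ * P₁)ᵀ = P₁ * B * S⁻¹ := by
        simp only [transpose_mul, transpose_transpose, hSinvT, hP₁.eq,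
          Matrix.mul_assoc]
      have key : P₁ * (B * (S⁻¹ * (Bᵀ * (P₁ * (B * (S⁻¹ * (Bᵀ * P₁)))))))
          = P₁ * (B * (S⁻¹ * (Bᵀ * P₁)))
            - P₁ * (B * (S⁻¹ * (R * (S⁻¹ * (Bᵀ * P₁))))) := by
        have e : Bᵀ * (P₁ * (B * (S⁻¹ * (Bᵀ * P₁))))
            = (Bᵀ * P₁ * B) * (S⁻¹ * (Bᵀ * P₁)) := by
          simp only [Matrix.mul_assoc]
        rw [e, hBPB, Matrix.sub_mul, Matrix.mul_sub, ← Matrix.mul_assoc S⁻¹ S, hSinv,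
          Matrix.one_mul, Matrix.mul_sub, Matrix.mul_sub]
      have hGeq : (E⁻¹)ᵀ * P₀ * E⁻¹ - Q - Mᵀ * P₁ * M
          = (S⁻¹ * Bᵀ * P₁)ᵀ * R * (S⁻¹ * Bᵀ * P₁) := by
        rw [hRic', hMT, hMdef, hKT]
        simp only [Matrix.add_mul, Matrix.mul_add, Matrix.one_mul,
          Matrix.mul_one, Matrix.neg_mul, Matrix.mul_neg, Matrix.mul_assoc]
        rw [key]
        abel
      intro v
      rw [hGeq]
      have hps : ((S⁻¹ * Bᵀ * P₁)ᵀ * R * (S⁻¹ * Bᵀ * P₁)).PosSemidef := by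
        have h2 := hR.posSemidef.conjTranspose_mul_mul_same (S⁻¹ * Bᵀ * P₁)
        rwa [conjTranspose_eq_transpose_of_trivial] at h2
      have h3 := hps.dotProduct_mulVec_nonneg v
      rw [dotProduct_comm]
      simpa using h3
    · have hSinv0 : S⁻¹ = 0 :=
        Matrix.nonsing_inv_apply_not_isUnit _
          (fun h => hS ((Matrix.isUnit_iff_isUnit_det S).mpr h))
      intro v
      have h0 : (E⁻¹)ᵀ * P₀ * E⁻¹ - Q - Mᵀ * P₁ * M = 0 := by
        rw [hRic', hMdef, hSinv0]
        simp only [neg_zero, Matrix.zero_mul, Matrix.mul_zero, add_zero,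
          transpose_one, Matrix.one_mul, Matrix.mul_one, sub_zero, sub_self]
      rw [h0]
      simp
  have hsub : ((E⁻¹)ᵀ * P₀ * E⁻¹ - Q - Mᵀ * P₁ * M).mulVec y ⬝ᵥ y
      = ((E⁻¹)ᵀ * P₀ * E⁻¹).mulVec y ⬝ᵥ y - Q.mulVec y ⬝ᵥ y
        - (Mᵀ * P₁ * M).mulVec y ⬝ᵥ y := by
    simp only [Matrix.sub_mulVec, sub_dotProduct]
  have h4 := hG y
  rw [hsub] at h4
  rw [hLHS, hP0]
  linarith
end

section
/- Let A ∈ ℂ^{n×n} and B ∈ ℂ^{n×m} satisfy the Kalman rank condition Rank(B, AB, …, A^{n−1}B) = n. Then Rank(λ I_n − A, B) = n for every λ ∈ ℂ. -/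
open Matrix

lemma rank_eq_iff_vecMul_eq_zero (n : ℕ) {K : Type*} [Fintype K] (M : Matrix (Fin n) K ℂ) :
    M.rank = n ↔ ∀ x : Fin n → ℂ, M.vecMul x = 0 → x = 0 := by
  have h1 : M.rank = n ↔ LinearIndependent ℂ (fun i => M i) := by
    rw [M.rank_eq_finrank_span_row, linearIndependent_iff_card_eq_finrank_span,
      Set.finrank, Fintype.card_fin]
    exact eq_comm
  rw [h1]
  show LinearIndependent ℂ M.row ↔ _
  rw [← Matrix.vecMul_injective_iff]
  constructor
  · intro h x hx
    apply h
    show x ᵥ* M = 0 ᵥ* M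
    rw [hx, Matrix.zero_vecMul]
  · intro h a b hab
    have : M.vecMul (a - b) = 0 := by
      rw [Matrix.sub_vecMul]
      exact sub_eq_zero.mpr hab
    have := h _ this
    exact sub_eq_zero.mp this

/-- Kalman rank condition implies the Hautus rank condition at every `λ ∈ ℂ`.
The Kalman matrix `(B, AB, …, A^{n−1}B)` is indexed by `Fin n × Fin m`. -/
theorem stmt_14 (n m : ℕ) (A : Matrix (Fin n) (Fin n) ℂ)
    (B : Matrix (Fin n) (Fin m) ℂ)
    (hKalman : (Matrix.of fun i (p : Fin n × Fin m) =>
      ((A ^ (p.1 : ℕ)) * B) i p.2).rank = n) :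
    ∀ lam : ℂ,
      (Matrix.fromCols (lam • (1 : Matrix (Fin n) (Fin n) ℂ) - A) B).rank = n := by
  intro lam
  rw [rank_eq_iff_vecMul_eq_zero] at hKalman ⊢
  intro x hx
  rw [Matrix.vecMul_fromCols] at hx
  have h1 : x ᵥ* (lam • (1 : Matrix (Fin n) (Fin n) ℂ) - A) = 0 :=
    funext fun j => congr_fun hx (Sum.inl j)
  have h2 : x ᵥ* B = 0 := funext fun j => congr_fun hx (Sum.inr j)
  have hA : x ᵥ* A = lam • x := by
    have := sub_eq_zero.mp (by rw [← Matrix.vecMul_sub]; exact h1 : x ᵥ* (lam • 1) - x ᵥ* A = 0)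
    rw [← this]
    ext j
    simp [Matrix.vecMul_smul, Matrix.vecMul_one]
  have hpow : ∀ k : ℕ, x ᵥ* (A ^ k) = (lam ^ k) • x := by
    intro k
    induction k with
    | zero => simp [Matrix.vecMul_one]
    | succ k ih =>
      rw [pow_succ, ← Matrix.vecMul_vecMul, ih, Matrix.smul_vecMul, hA, smul_smul, ← pow_succ]
  apply hKalman x
  ext p
  have : x ᵥ* (A ^ (p.1 : ℕ) * B) = 0 := by
    rw [← Matrix.vecMul_vecMul, hpow, Matrix.smul_vecMul, h2, smul_zero]
  have h3 := congr_fun this p.2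
  simpa [Matrix.vecMul, dotProduct] using h3
end
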